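/- For every λ ∈ ℤ^D \ {0} the function ζ_λ satisfies: (i) for all t > 0, min_{1≤i≤D} 1/(1−p_i) ≤ ζ_λ(t) ≤ max_{1≤i≤D} 1/(1−p_i); (ii) t ↦ ζ_λ(t) is nonincreasing on (0,∞); (iii) ∫_0^1 |ζ_λ′(s)| ds ≤ max_{1≤i≤D} 1/(1−p_i) − min_{1≤i≤D} 1/(1−p_i). -/

import Mathlib

open Real Filter MeasureTheory Topology

/-- τ_λ(t) = (∑ᵢ t^(2-2pᵢ) λᵢ²)^(1/2). -/
noncomputable def tau {D : ℕ} (p : Fin D → ℝ) (lam : Fin D → ℤ) (t : ℝ) : ℝ :=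
  Real.sqrt (∑ i, t ^ (2 - 2 * p i) * ((lam i : ℝ)) ^ 2)

/-- ζ_λ(t) = 2τ_λ(t)² / ∑ᵢ (2-2pᵢ) t^(2-2pᵢ) λᵢ². -/
noncomputable def zeta {D : ℕ} (p : Fin D → ℝ) (lam : Fin D → ℤ) (t : ℝ) : ℝ :=
  2 * tau p lam t ^ 2 / ∑ i, (2 - 2 * p i) * t ^ (2 - 2 * p i) * ((lam i : ℝ)) ^ 2

noncomputable def Nf {D : ℕ} (p : Fin D → ℝ) (lam : Fin D → ℤ) (t : ℝ) : ℝ :=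
  ∑ i, t ^ (2 - 2 * p i) * ((lam i : ℝ)) ^ 2

noncomputable def Sf {D : ℕ} (p : Fin D → ℝ) (lam : Fin D → ℤ) (t : ℝ) : ℝ :=
  ∑ i, (2 - 2 * p i) * t ^ (2 - 2 * p i) * ((lam i : ℝ)) ^ 2

noncomputable def Qf {D : ℕ} (p : Fin D → ℝ) (lam : Fin D → ℤ) (t : ℝ) : ℝ :=
  ∑ i, (2 - 2 * p i) ^ 2 * t ^ (2 - 2 * p i) * ((lam i : ℝ)) ^ 2

noncomputable def gf {D : ℕ} (p : Fin D → ℝ) (lam : Fin D → ℤ) (t : ℝ) : ℝ :=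
  2 * Nf p lam t / Sf p lam t

noncomputable def gf' {D : ℕ} (p : Fin D → ℝ) (lam : Fin D → ℤ) (t : ℝ) : ℝ :=
  (2 * (Sf p lam t / t) * Sf p lam t - 2 * Nf p lam t * (Qf p lam t / t)) / Sf p lam t ^ 2

section aux
variable {D : ℕ} {p : Fin D → ℝ} {lam : Fin D → ℤ} {t : ℝ}

lemma Nf_pos (hlam : lam ≠ 0) (ht : 0 < t) : 0 < Nf p lam t := by
  obtain ⟨j, hj⟩ := Function.ne_iff.1 hlam
  refine Finset.sum_pos' (fun i _ => by positivity) ⟨j, Finset.mem_univ j, ?_⟩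
  have : ((lam j : ℝ)) ≠ 0 := by exact_mod_cast hj
  positivity

lemma Sf_pos (hp : ∀ i, p i < 1) (hlam : lam ≠ 0) (ht : 0 < t) : 0 < Sf p lam t := by
  obtain ⟨j, hj⟩ := Function.ne_iff.1 hlam
  refine Finset.sum_pos' (fun i _ => ?_) ⟨j, Finset.mem_univ j, ?_⟩
  · have := (hp i).le; have : (0:ℝ) ≤ 2 - 2 * p i := by linarith
    positivity
  · have h1 : (0:ℝ) < 2 - 2 * p j := by have := hp j; linarith
    have h2 : ((lam j : ℝ)) ≠ 0 := by exact_mod_cast hj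
    positivity

lemma zeta_eq (ht : 0 < t) : zeta p lam t = 2 * Nf p lam t / Sf p lam t := by
  unfold zeta tau Nf Sf
  rw [Real.sq_sqrt]
  exact Finset.sum_nonneg fun i _ => by positivity

lemma hasDerivAt_Nf (ht : 0 < t) : HasDerivAt (Nf p lam) (Sf p lam t / t) t := by
  have h : ∀ i : Fin D, HasDerivAt (fun s : ℝ => s ^ (2 - 2 * p i) * ((lam i : ℝ)) ^ 2)
      ((2 - 2 * p i) * t ^ (2 - 2 * p i) * ((lam i : ℝ)) ^ 2 / t) t := by
    intro i
    have := (Real.hasDerivAt_rpow_const (p := 2 - 2 * p i) (Or.inl ht.ne')).mul_const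
      (((lam i : ℝ)) ^ 2)
    refine this.congr_deriv ?_
    rw [Real.rpow_sub_one ht.ne']
    ring
  have := HasDerivAt.fun_sum (u := Finset.univ) (fun i _ => h i)
  simp only [Sf, Finset.sum_div]; exact this

lemma hasDerivAt_Sf (ht : 0 < t) : HasDerivAt (Sf p lam) (Qf p lam t / t) t := by
  have h : ∀ i : Fin D, HasDerivAt (fun s : ℝ => (2 - 2 * p i) * s ^ (2 - 2 * p i) * ((lam i : ℝ)) ^ 2)
      ((2 - 2 * p i) ^ 2 * t ^ (2 - 2 * p i) * ((lam i : ℝ)) ^ 2 / t) t := by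
    intro i
    have := (((Real.hasDerivAt_rpow_const (p := 2 - 2 * p i) (Or.inl ht.ne')).const_mul
      (2 - 2 * p i)).mul_const (((lam i : ℝ)) ^ 2))
    refine this.congr_deriv ?_
    rw [Real.rpow_sub_one ht.ne']
    ring
  have := HasDerivAt.fun_sum (u := Finset.univ) (fun i _ => h i)
  simp only [Qf, Finset.sum_div]; exact this

lemma hasDerivAt_gf (hp : ∀ i, p i < 1) (hlam : lam ≠ 0) (ht : 0 < t) :
    HasDerivAt (gf p lam) (gf' p lam t) t := by
  have hN := (hasDerivAt_Nf (p := p) (lam := lam) ht).const_mul 2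
  have hS := hasDerivAt_Sf (p := p) (lam := lam) ht
  have hSne := (Sf_pos hp hlam ht).ne'
  exact hN.div hS hSne

lemma CS_ineq (ht : 0 < t) : Sf p lam t ^ 2 ≤ Nf p lam t * Qf p lam t := by
  have key := Finset.sum_mul_sq_le_sq_mul_sq Finset.univ
    (fun i => Real.sqrt (t ^ (2 - 2 * p i)) * |((lam i : ℝ))|)
    (fun i => (2 - 2 * p i) * (Real.sqrt (t ^ (2 - 2 * p i)) * |((lam i : ℝ))|))
  have hsq : ∀ i : Fin D, (Real.sqrt (t ^ (2 - 2 * p i)) * |((lam i : ℝ))|) ^ 2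
      = t ^ (2 - 2 * p i) * ((lam i : ℝ)) ^ 2 := by
    intro i
    rw [mul_pow, Real.sq_sqrt (Real.rpow_nonneg ht.le _), sq_abs]
  calc Sf p lam t ^ 2
      = (∑ i, (Real.sqrt (t ^ (2 - 2 * p i)) * |((lam i : ℝ))|) *
          ((2 - 2 * p i) * (Real.sqrt (t ^ (2 - 2 * p i)) * |((lam i : ℝ))|))) ^ 2 := by
        unfold Sf; congr 1; apply Finset.sum_congr rfl; intro i _
        linear_combination (-(2 - 2 * p i)) * hsq i
    _ ≤ (∑ i, (Real.sqrt (t ^ (2 - 2 * p i)) * |((lam i : ℝ))|) ^ 2) *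
          (∑ i, ((2 - 2 * p i) * (Real.sqrt (t ^ (2 - 2 * p i)) * |((lam i : ℝ))|)) ^ 2) := key
    _ = Nf p lam t * Qf p lam t := by
        unfold Nf Qf; congr 1
        · exact Finset.sum_congr rfl fun i _ => hsq i
        · apply Finset.sum_congr rfl; intro i _
          rw [mul_pow, hsq i]; ring

lemma gf'_nonpos (hp : ∀ i, p i < 1) (hlam : lam ≠ 0) (ht : 0 < t) : gf' p lam t ≤ 0 := by
  have hCS := CS_ineq (p := p) (lam := lam) ht
  have hnum : 2 * (Sf p lam t / t) * Sf p lam t - 2 * Nf p lam t * (Qf p lam t / t) ≤ 0 := by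
    have h : 2 * (Sf p lam t / t) * Sf p lam t - 2 * Nf p lam t * (Qf p lam t / t)
        = (2 / t) * (Sf p lam t ^ 2 - Nf p lam t * Qf p lam t) := by ring
    rw [h]
    apply mul_nonpos_of_nonneg_of_nonpos (by positivity) (by linarith)
  exact div_nonpos_of_nonpos_of_nonneg hnum (sq_nonneg _)


lemma gf_bounds (hp : ∀ i, p i < 1) (hlam : lam ≠ 0) (ht : 0 < t) :
    sInf (Set.range fun i => 1 / (1 - p i)) ≤ gf p lam t ∧
    gf p lam t ≤ sSup (Set.range fun i => 1 / (1 - p i)) := by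
  have hS := Sf_pos hp hlam ht
  have hfin : (Set.range fun i : Fin D => 1 / (1 - p i)).Finite := Set.finite_range _
  have hterm : ∀ i : Fin D, (1 / (1 - p i)) * ((2 - 2 * p i) * t ^ (2 - 2 * p i) * ((lam i : ℝ)) ^ 2)
      = 2 * (t ^ (2 - 2 * p i) * ((lam i : ℝ)) ^ 2) := by
    intro i
    have h1 : (0:ℝ) < 1 - p i := by linarith [hp i]
    field_simp
  have htnn : ∀ i : Fin D, 0 ≤ (2 - 2 * p i) * t ^ (2 - 2 * p i) * ((lam i : ℝ)) ^ 2 := by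
    intro i
    have h1 : (0:ℝ) ≤ 2 - 2 * p i := by linarith [hp i]
    exact mul_nonneg (mul_nonneg h1 (Real.rpow_nonneg ht.le _)) (sq_nonneg _)
  constructor
  · rw [gf, le_div_iff₀ hS]
    unfold Nf Sf
    rw [Finset.mul_sum, Finset.mul_sum]
    apply Finset.sum_le_sum
    intro i _
    have hm : sInf (Set.range fun i : Fin D => 1 / (1 - p i)) ≤ 1 / (1 - p i) :=
      csInf_le hfin.bddBelow ⟨i, rfl⟩
    calc sInf (Set.range fun i : Fin D => 1 / (1 - p i)) *
          ((2 - 2 * p i) * t ^ (2 - 2 * p i) * ((lam i : ℝ)) ^ 2)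
        ≤ (1 / (1 - p i)) * ((2 - 2 * p i) * t ^ (2 - 2 * p i) * ((lam i : ℝ)) ^ 2) :=
          mul_le_mul_of_nonneg_right hm (htnn i)
      _ = 2 * (t ^ (2 - 2 * p i) * ((lam i : ℝ)) ^ 2) := hterm i
  · rw [gf, div_le_iff₀ hS]
    unfold Nf Sf
    rw [Finset.mul_sum, Finset.mul_sum]
    apply Finset.sum_le_sum
    intro i _
    have hm : 1 / (1 - p i) ≤ sSup (Set.range fun i : Fin D => 1 / (1 - p i)) :=
      le_csSup hfin.bddAbove ⟨i, rfl⟩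
    calc 2 * (t ^ (2 - 2 * p i) * ((lam i : ℝ)) ^ 2)
        = (1 / (1 - p i)) * ((2 - 2 * p i) * t ^ (2 - 2 * p i) * ((lam i : ℝ)) ^ 2) := (hterm i).symm
      _ ≤ sSup (Set.range fun i : Fin D => 1 / (1 - p i)) *
          ((2 - 2 * p i) * t ^ (2 - 2 * p i) * ((lam i : ℝ)) ^ 2) :=
          mul_le_mul_of_nonneg_right hm (htnn i)

end aux

/-- Lemma 3.1 (Lemma `lem:tau`): bounds, monotonicity and BV estimate for ζ_λ. -/
theorem zeta_bounds_monotone_bv (D : ℕ) (hD : 2 ≤ D) (p : Fin D → ℝ) (hp : ∀ i, p i < 1)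
    (lam : Fin D → ℤ) (hlam : lam ≠ 0) :
    (∀ t : ℝ, 0 < t →
      sInf (Set.range fun i => 1 / (1 - p i)) ≤ zeta p lam t ∧
        zeta p lam t ≤ sSup (Set.range fun i => 1 / (1 - p i))) ∧
    AntitoneOn (zeta p lam) (Set.Ioi 0) ∧
    MeasureTheory.IntegrableOn (fun s => |deriv (zeta p lam) s|) (Set.Ioc 0 1) ∧
    (∫ s in Set.Ioc (0:ℝ) 1, |deriv (zeta p lam) s|) ≤
      sSup (Set.range fun i => 1 / (1 - p i)) - sInf (Set.range fun i => 1 / (1 - p i)) := by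
  set m := sInf (Set.range fun i => 1 / (1 - p i)) with hmdef
  set M := sSup (Set.range fun i => 1 / (1 - p i)) with hMdef
  have hbound : ∀ t : ℝ, 0 < t → m ≤ zeta p lam t ∧ zeta p lam t ≤ M := by
    intro t ht
    rw [zeta_eq ht]
    exact gf_bounds hp hlam ht
  have hanti_g : AntitoneOn (gf p lam) (Set.Ioi 0) := by
    apply antitoneOn_of_deriv_nonpos (convex_Ioi 0)
    · intro x hx
      exact (hasDerivAt_gf hp hlam hx).continuousAt.continuousWithinAt
    · rw [interior_Ioi]
      intro x hx
      exact (hasDerivAt_gf hp hlam hx).differentiableAt.differentiableWithinAt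
    · rw [interior_Ioi]
      intro x hx
      rw [(hasDerivAt_gf hp hlam hx).deriv]
      exact gf'_nonpos hp hlam hx
  have hanti : AntitoneOn (zeta p lam) (Set.Ioi 0) := by
    intro x hx y hy hxy
    rw [zeta_eq (Set.mem_Ioi.1 hx), zeta_eq (Set.mem_Ioi.1 hy)]
    exact hanti_g hx hy hxy
  have hderiv : ∀ x : ℝ, 0 < x → deriv (zeta p lam) x = gf' p lam x := by
    intro x hx
    have hev : zeta p lam =ᶠ[𝓝 x] gf p lam :=
      Filter.eventually_of_mem (isOpen_Ioi.mem_nhds hx) (fun y hy => zeta_eq hy)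
    rw [hev.deriv_eq, (hasDerivAt_gf hp hlam hx).deriv]
  have hcont' : ∀ x : ℝ, 0 < x → ContinuousAt (gf' p lam) x := by
    intro x hx
    have hN := (hasDerivAt_Nf (p := p) (lam := lam) hx).continuousAt
    have hS := (hasDerivAt_Sf (p := p) (lam := lam) hx).continuousAt
    have hQ : ContinuousAt (Qf p lam) x := by
      unfold Qf
      exact tendsto_finset_sum _ fun i _ =>
        ((Real.continuousAt_rpow_const x _ (Or.inl hx.ne')).const_mul _).mul_const _
    have hSpos := Sf_pos hp hlam hx
    unfold gf'
    exact ((((hS.div continuousAt_id hx.ne').const_mul 2).mul hS).sub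
      ((hN.const_mul 2).mul (hQ.div continuousAt_id hx.ne'))).div (hS.pow 2)
      (pow_ne_zero 2 hSpos.ne')
  have key : ∀ ε : ℝ, 0 < ε → ε ≤ 1 →
      MeasureTheory.IntegrableOn (fun s => |deriv (zeta p lam) s|) (Set.Ioc ε 1) ∧
      (∫ s in Set.Ioc ε 1, |deriv (zeta p lam) s|) = gf p lam ε - gf p lam 1 := by
    intro ε hε hε1
    have hsub : Set.Icc ε 1 ⊆ Set.Ioi 0 := fun y hy => lt_of_lt_of_le hε hy.1
    have hcg : ContinuousOn (gf' p lam) (Set.Icc ε 1) :=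
      fun y hy => (hcont' y (hsub hy)).continuousWithinAt
    have hInt : IntervalIntegrable (gf' p lam) volume ε 1 := by
      apply ContinuousOn.intervalIntegrable
      rwa [Set.uIcc_of_le hε1]
    have hFTC : ∫ s in ε..1, gf' p lam s = gf p lam 1 - gf p lam ε := by
      apply intervalIntegral.integral_eq_sub_of_hasDerivAt
      · intro y hy
        rw [Set.uIcc_of_le hε1] at hy
        exact hasDerivAt_gf hp hlam (hsub hy)
      · exact hInt
    have heq : Set.EqOn (fun s => |deriv (zeta p lam) s|) (fun s => -(gf' p lam s)) (Set.Ioc ε 1) := by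
      intro y hy
      have hy0 : 0 < y := lt_trans hε hy.1
      simp only
      rw [hderiv y hy0, abs_of_nonpos (gf'_nonpos hp hlam hy0)]
    have hIntOn : MeasureTheory.IntegrableOn (fun s => -(gf' p lam s)) (Set.Ioc ε 1) :=
      (hcg.neg.integrableOn_Icc).mono_set Set.Ioc_subset_Icc_self
    refine ⟨hIntOn.congr_fun heq.symm measurableSet_Ioc, ?_⟩
    rw [MeasureTheory.setIntegral_congr_fun measurableSet_Ioc heq, MeasureTheory.integral_neg,
      ← intervalIntegral.integral_of_le hε1, hFTC]
    ring
  have hbnd : ∀ ε : ℝ, 0 < ε → ε ≤ 1 → (∫ s in Set.Ioc ε 1, |deriv (zeta p lam) s|) ≤ M - m := by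
    intro ε hε hε1
    rw [(key ε hε hε1).2]
    have h1 := gf_bounds (t := ε) hp hlam hε
    have h2 := gf_bounds (t := 1) hp hlam one_pos
    rw [← hmdef, ← hMdef] at h1 h2
    linarith [h1.2, h2.1]
  have hεn : ∀ n : ℕ, (0:ℝ) < 1/(n+1) := fun n => by positivity
  have hεn1 : ∀ n : ℕ, (1:ℝ)/(n+1) ≤ 1 := fun n => by
    rw [div_le_one (by positivity)]
    exact le_add_of_nonneg_left (Nat.cast_nonneg n)
  have hInt01 : MeasureTheory.IntegrableOn (fun s => |deriv (zeta p lam) s|) (Set.Ioc 0 1) := by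
    apply MeasureTheory.integrableOn_Ioc_of_intervalIntegral_norm_bounded_left
      (a := fun n : ℕ => 1/(n+1)) (I := M - m) (fun n => (key _ (hεn n) (hεn1 n)).1)
      tendsto_one_div_add_atTop_nhds_zero_nat
    filter_upwards with n
    calc (∫ x in Set.Ioc ((1:ℝ)/(n+1)) 1, ‖|deriv (zeta p lam) x|‖)
        = ∫ x in Set.Ioc ((1:ℝ)/(n+1)) 1, |deriv (zeta p lam) x| := by
          simp [Real.norm_eq_abs, abs_abs]
      _ ≤ M - m := hbnd _ (hεn n) (hεn1 n)
  have hU : (⋃ n : ℕ, Set.Ioc ((1:ℝ)/(n+1)) 1) = Set.Ioc 0 1 := by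
    ext x
    simp only [Set.mem_iUnion, Set.mem_Ioc]
    constructor
    · rintro ⟨n, h1, h2⟩
      exact ⟨lt_trans (hεn n) h1, h2⟩
    · rintro ⟨h1, h2⟩
      obtain ⟨n, hn⟩ := exists_nat_one_div_lt h1
      exact ⟨n, hn, h2⟩
  have hmono : Monotone (fun n : ℕ => Set.Ioc ((1:ℝ)/(n+1)) 1) := by
    intro a b hab
    apply Set.Ioc_subset_Ioc_left
    apply one_div_le_one_div_of_le (by positivity)
    have : (a:ℝ) ≤ (b:ℝ) := Nat.cast_le.2 hab
    linarith
  have hlim : Tendsto (fun n : ℕ => ∫ s in Set.Ioc ((1:ℝ)/(n+1)) 1, |deriv (zeta p lam) s|) atTop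
      (𝓝 (∫ s in Set.Ioc (0:ℝ) 1, |deriv (zeta p lam) s|)) := by
    have := MeasureTheory.tendsto_setIntegral_of_monotone
      (s := fun n : ℕ => Set.Ioc ((1:ℝ)/(n+1)) 1)
      (fun n => measurableSet_Ioc) hmono (hU.symm ▸ hInt01)
    rwa [hU] at this
  have hfinal := le_of_tendsto hlim
    (Filter.Eventually.of_forall fun n => hbnd _ (hεn n) (hεn1 n))
  exact ⟨hbound, hanti, hInt01, hfinal⟩
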